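/- Fix ρ > 0, A > 0, a finite set C ⊂ Z^d, and define for φ: C → R the truncated functional L_{C,A}(φ) := Σ_{x∈C} e^{φ(x)/ρ} 1_{{φ(x) ≥ -2A}}. Suppose A ≥ χ_C and A(1 + A/(4d)) ≥ 4d, and set η(A) := 2d(1 + A/(4d))^{-1}. Then for all a ∈ R and all ξ: if λ_C^{(1)}(ξ) ≥ a then L_{C,A}(ξ - a - χ_C) ≥ e^{-η(A)/ρ}. -/

import Mathlib

open Matrix


open scoped BigOperators
open MeasureTheory

namespace RSO

abbrev Site (d : ℕ) := Fin d → ℤ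

/-- ℓ¹ distance on ℤ^d. -/
def dist1 {d : ℕ} (x y : Site d) : ℕ := ∑ i, (x i - y i).natAbs

lemma dist1_comm {d : ℕ} (x y : Site d) : dist1 x y = dist1 y x :=
  Finset.sum_congr rfl fun i _ => by omega

/-- The Dirichlet Hamiltonian `Δ + ξ` on `D` as a matrix (Dirichlet b.c. outside `D`). -/
noncomputable def matH {d : ℕ} (D : Finset (Site d)) (ξ : Site d → ℝ) :
    Matrix D D ℝ := fun x y =>
  (if dist1 (x : Site d) (y : Site d) = 1 then (1 : ℝ) else 0) +
    (if x = y then ξ (x : Site d) - 2 * d else 0)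

lemma matH_isHermitian {d : ℕ} (D : Finset (Site d)) (ξ : Site d → ℝ) :
    (matH D ξ).IsHermitian := by
  ext x y
  simp only [matH, Matrix.conjTranspose_apply, star_add, star_one, star_zero]
  rw [dist1_comm]
  by_cases h : x = y <;> simp [h, eq_comm, star_trivial]

/-- `lambdaK D ξ k` is the `k`-th largest (1-indexed) eigenvalue of the Dirichlet
Hamiltonian `Δ + ξ` on `D` (junk value `0` if `k` is out of range). -/
noncomputable def lambdaK {d : ℕ} (D : Finset (Site d)) (ξ : Site d → ℝ) (k : ℕ) : ℝ :=
  (List.insertionSort (fun a b : ℝ => b ≤ a)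
      ((D.attach.val.map (matH_isHermitian D ξ).eigenvalues).toList)).getD (k - 1) 0

/-- The Dirichlet Hamiltonian applied to a function (with Dirichlet b.c.). -/
noncomputable def hamApply {d : ℕ} (D : Finset (Site d)) (ξ : Site d → ℝ)
    (f : Site d → ℝ) (x : Site d) : ℝ :=
  (∑ y ∈ D.filter (fun y => dist1 x y = 1), f y) + (ξ x - 2 * d) * f x

/-- `ψ` is an eigenfunction of `H_{D,ξ}` with eigenvalue `lam`. -/
def IsEigen {d : ℕ} (D : Finset (Site d)) (ξ : Site d → ℝ) (lam : ℝ)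
    (ψ : Site d → ℝ) : Prop :=
  (∀ x ∉ D, ψ x = 0) ∧ ψ ≠ 0 ∧ ∀ x ∈ D, hamApply D ξ ψ x = lam * ψ x


/-- The large-deviation functional `L_C(φ) = Σ_{x∈C} e^{φ(x)/ρ}`. -/
noncomputable def LC {d : ℕ} (ρ : ℝ) (C : Finset (Site d)) (φ : Site d → ℝ) : ℝ :=
  ∑ x ∈ C, Real.exp (φ x / ρ)

/-- `χ_C := -sup{λ_C^{(1)}(φ) : L_C(φ) ≤ 1}`. -/
noncomputable def chi {d : ℕ} (ρ : ℝ) (C : Finset (Site d)) : ℝ :=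
  -sSup ((fun φ : Site d → ℝ => lambdaK C φ 1) '' {φ : Site d → ℝ | LC ρ C φ ≤ 1})

/-- The truncated functional `L_{C,A}(φ) = Σ_{x∈C} e^{φ(x)/ρ} 1_{φ(x) ≥ -2A}`. -/
noncomputable def LCA {d : ℕ} (ρ A : ℝ) (C : Finset (Site d)) (φ : Site d → ℝ) : ℝ :=
  ∑ x ∈ C, if -(2 * A) ≤ φ x then Real.exp (φ x / ρ) else 0



variable {d : ℕ}

lemma lambdaK_one_max {D : Finset (Site d)} (hD : D.Nonempty) (ξ : Site d → ℝ) :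
    (∃ i : D, (matH_isHermitian D ξ).eigenvalues i = lambdaK D ξ 1) ∧
      ∀ i : D, (matH_isHermitian D ξ).eigenvalues i ≤ lambdaK D ξ 1 := by
  classical
  set l := ((D.attach.val.map (matH_isHermitian D ξ).eigenvalues).toList) with hl
  have hperm := List.perm_insertionSort (fun a b : ℝ => b ≤ a) l
  have hsort := List.pairwise_insertionSort (fun a b : ℝ => b ≤ a) l
  have hne : (List.insertionSort (fun a b : ℝ => b ≤ a) l) ≠ [] := by
    intro h
    have hnil : l = [] := List.Perm.eq_nil (hperm.symm.trans (by rw [h]))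
    have h0 : (D.attach.val.map (matH_isHermitian D ξ).eigenvalues) = 0 := by
      simpa [hl, Multiset.toList_eq_nil] using hnil
    have : D.val.attach = 0 := by
      have := congrArg Multiset.card h0
      simpa [Multiset.card_map] using this
    obtain ⟨z, hz⟩ := hD
    have : (⟨z, hz⟩ : {x // x ∈ D}) ∈ D.val.attach := Multiset.mem_attach _ _
    simp_all
  obtain ⟨x, rest, hx⟩ := List.exists_cons_of_ne_nil hne
  have hlam : lambdaK D ξ 1 = x := by
    simp only [lambdaK, ← hl, hx]
    rfl
  have hmemiff : ∀ μ : ℝ, μ ∈ l ↔ ∃ i : D, (matH_isHermitian D ξ).eigenvalues i = μ := by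
    intro μ
    constructor
    · intro hm
      obtain ⟨i, _, hi⟩ := Multiset.mem_map.mp (Multiset.mem_toList.mp (hl ▸ hm))
      exact ⟨i, hi⟩
    · rintro ⟨i, rfl⟩
      rw [hl]
      exact Multiset.mem_toList.mpr (Multiset.mem_map_of_mem _ (Multiset.mem_attach _ _))
  constructor
  · have : x ∈ l := hperm.mem_iff.mp (by simp [hx])
    rw [hlam]; exact (hmemiff x).mp this
  · intro i
    have hmem : (matH_isHermitian D ξ).eigenvalues i ∈ List.insertionSort (fun a b : ℝ => b ≤ a) l :=
      hperm.mem_iff.mpr ((hmemiff _).mpr ⟨i, rfl⟩)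
    rw [hx] at hmem hsort
    rw [hlam]
    rcases List.mem_cons.mp hmem with h | h
    · exact le_of_eq h
    · exact (List.rel_of_pairwise_cons hsort) h


lemma mulVec_matH {D : Finset (Site d)} (ξ : Site d → ℝ) (f : Site d → ℝ) (x : D) :
    ((matH D ξ) *ᵥ (fun y : D => f y)) x = hamApply D ξ f x := by
  classical
  simp only [Matrix.mulVec, dotProduct, matH, add_mul, ite_mul, one_mul, zero_mul]
  rw [Finset.sum_add_distrib]
  congr 1
  · simp only [Finset.sum_filter]
    exact Finset.sum_coe_sort D (fun y => if dist1 (x : Site d) y = 1 then f y else 0)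
  · rw [Finset.sum_ite_eq Finset.univ x (fun y : D => (ξ (x:Site d) - 2*d) * f y)]
    simp

lemma inner_dot (D : Finset (Site d)) (u v : EuclideanSpace ℝ D) :
    (inner ℝ u v : ℝ) = (u : D → ℝ) ⬝ᵥ (v : D → ℝ) := by
  simp [PiLp.inner_apply, dotProduct, RCLike.inner_apply, mul_comm]

lemma rayleigh_vec_le {D : Finset (Site d)} (hD : D.Nonempty) (ξ : Site d → ℝ)
    (w : D → ℝ) :
    w ⬝ᵥ ((matH D ξ) *ᵥ w) ≤ lambdaK D ξ 1 * (w ⬝ᵥ w) := by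
  classical
  set hH := matH_isHermitian D ξ
  set b := hH.eigenvectorBasis with hb
  have hsym : ∀ i : D, (b i : D → ℝ) ⬝ᵥ ((matH D ξ) *ᵥ w)
      = hH.eigenvalues i * ((b i : D → ℝ) ⬝ᵥ w) := by
    intro i
    have htr : (matH D ξ)ᵀ = matH D ξ := by
      have := hH.eq
      rwa [Matrix.conjTranspose_eq_transpose_of_trivial] at this
    have h2 : (b i : D → ℝ) ᵥ* matH D ξ = hH.eigenvalues i • (b i : D → ℝ) := by
      conv_lhs => rw [← htr]
      rw [Matrix.vecMul_transpose]
      exact hH.mulVec_eigenvectorBasis i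
    rw [Matrix.dotProduct_mulVec, h2]
    exact smul_dotProduct _ _ _
  have hexp : w ⬝ᵥ ((matH D ξ) *ᵥ w)
      = ∑ i, hH.eigenvalues i * ((b i : D → ℝ) ⬝ᵥ w) ^ 2 := by
    have h1 := b.sum_inner_mul_inner (WithLp.toLp 2 w : EuclideanSpace ℝ D) (WithLp.toLp 2 ((matH D ξ) *ᵥ w))
    rw [inner_dot] at h1
    simp only [WithLp.ofLp_toLp] at h1
    rw [← h1]
    congr 1
    ext i
    rw [inner_dot, inner_dot]; simp only [WithLp.ofLp_toLp]; rw [hsym i]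
    have : (w : D → ℝ) ⬝ᵥ (b i : D → ℝ) = (b i : D → ℝ) ⬝ᵥ w := dotProduct_comm _ _
    rw [this]; ring
  have hpar : (w : D → ℝ) ⬝ᵥ w = ∑ i, ((b i : D → ℝ) ⬝ᵥ w) ^ 2 := by
    have h1 := b.sum_inner_mul_inner (WithLp.toLp 2 w : EuclideanSpace ℝ D) (WithLp.toLp 2 w : EuclideanSpace ℝ D)
    rw [inner_dot] at h1
    simp only [WithLp.ofLp_toLp] at h1
    rw [← h1]
    congr 1
    ext i
    rw [inner_dot, inner_dot]; simp only [WithLp.ofLp_toLp]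
    have : (w : D → ℝ) ⬝ᵥ (b i : D → ℝ) = (b i : D → ℝ) ⬝ᵥ w := dotProduct_comm _ _
    rw [this]; ring
  rw [hexp, hpar, Finset.mul_sum]
  apply Finset.sum_le_sum
  intro i _
  exact mul_le_mul_of_nonneg_right ((lambdaK_one_max hD ξ).2 i) (sq_nonneg _)

lemma exists_eigenfun {D : Finset (Site d)} (hD : D.Nonempty) (ξ : Site d → ℝ) :
    ∃ f : Site d → ℝ, (∀ x ∉ D, f x = 0) ∧ (∃ x ∈ D, f x ≠ 0) ∧
      ∀ x ∈ D, hamApply D ξ f x = lambdaK D ξ 1 * f x := by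
  classical
  obtain ⟨⟨i₀, hi₀⟩, -⟩ := lambdaK_one_max hD ξ
  set hH := matH_isHermitian D ξ
  set v : D → ℝ := ⇑(hH.eigenvectorBasis i₀) with hv
  refine ⟨fun x => if h : x ∈ D then v ⟨x, h⟩ else 0, fun x hx => dif_neg hx, ?_, ?_⟩
  · have hvne : v ≠ 0 := by
      have := hH.eigenvectorBasis.orthonormal.ne_zero i₀
      intro h
      apply this
      ext j
      exact congrFun h j
    obtain ⟨j, hj⟩ := Function.ne_iff.mp hvne
    exact ⟨(j : Site d), j.2, by simpa [Subtype.eta] using hj⟩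
  · intro x hx
    have hfv : (fun y : D => (if h : (y : Site d) ∈ D then v ⟨y, h⟩ else 0)) = v := by
      ext y; simp [y.2]
    have := mulVec_matH ξ (fun x => if h : x ∈ D then v ⟨x, h⟩ else 0) ⟨x, hx⟩
    rw [hfv] at this
    rw [← this, hH.mulVec_eigenvectorBasis]
    simp [hi₀, hv, hx]


lemma dot_ham {D : Finset (Site d)} (ξ : Site d → ℝ) (f : Site d → ℝ) :
    (fun y : D => f y) ⬝ᵥ ((matH D ξ) *ᵥ (fun y : D => f y))
      = ∑ x ∈ D, f x * hamApply D ξ f x := by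
  rw [dotProduct]
  rw [show ∀ g : D → ℝ, ∑ x : D, (fun y : D => f y) x * g x = ∑ x : D, f x * g x from
    fun g => rfl]
  rw [Finset.sum_congr rfl (fun x _ => by rw [mulVec_matH ξ f x])]
  exact Finset.sum_coe_sort D (fun x => f x * hamApply D ξ f x)

lemma dot_self_fun {D : Finset (Site d)} (f : Site d → ℝ) :
    (fun y : D => f y) ⬝ᵥ (fun y : D => f y) = ∑ x ∈ D, f x ^ 2 := by
  rw [dotProduct]
  rw [Finset.sum_congr rfl (fun x _ => by rw [← pow_two])]
  exact Finset.sum_coe_sort D (fun x => f x ^ 2)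

lemma rayleigh_le_fun {D : Finset (Site d)} (hD : D.Nonempty) (ξ f : Site d → ℝ) :
    ∑ x ∈ D, f x * hamApply D ξ f x ≤ lambdaK D ξ 1 * ∑ x ∈ D, f x ^ 2 := by
  have h := rayleigh_vec_le hD ξ (fun y : D => f y)
  rwa [dot_ham, dot_self_fun] at h

lemma exists_nonneg_eigenfun {D : Finset (Site d)} (hD : D.Nonempty) (ξ : Site d → ℝ) :
    ∃ w : Site d → ℝ, (∀ x ∉ D, w x = 0) ∧ (∀ x, 0 ≤ w x) ∧ (∃ x ∈ D, 0 < w x) ∧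
      ∀ x ∈ D, hamApply D ξ w x = lambdaK D ξ 1 * w x := by
  classical
  obtain ⟨f, hsupp, ⟨x₀, hx₀, hfx₀⟩, heig⟩ := exists_eigenfun hD ξ
  set lam := lambdaK D ξ 1 with hlam
  set w : Site d → ℝ := fun x => |f x| with hw
  have hwnn : ∀ x, 0 ≤ w x := fun x => abs_nonneg _
  have hNeq : ∑ x ∈ D, w x ^ 2 = ∑ x ∈ D, f x ^ 2 :=
    Finset.sum_congr rfl fun x _ => sq_abs (f x)
  have hQf : ∑ x ∈ D, f x * hamApply D ξ f x = lam * ∑ x ∈ D, f x ^ 2 := by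
    rw [Finset.mul_sum]
    exact Finset.sum_congr rfl fun x hx => by rw [heig x hx]; ring
  -- Q(w) ≥ Q(f)
  have hsplit : ∀ g : Site d → ℝ, ∑ x ∈ D, g x * hamApply D ξ g x
      = (∑ x ∈ D, ∑ y ∈ D.filter (fun y => dist1 x y = 1), g x * g y)
        + ∑ x ∈ D, (ξ x - 2 * d) * g x ^ 2 := by
    intro g
    rw [← Finset.sum_add_distrib]
    refine Finset.sum_congr rfl fun x _ => ?_
    simp only [hamApply]
    rw [mul_add, Finset.mul_sum]
    ring
  have hQge : ∑ x ∈ D, f x * hamApply D ξ f x ≤ ∑ x ∈ D, w x * hamApply D ξ w x := by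
    rw [hsplit f, hsplit w]
    have hdiag : ∀ x ∈ D, (ξ x - 2 * d) * f x ^ 2 = (ξ x - 2 * d) * w x ^ 2 := by
      intro x _; rw [hw]; rw [sq_abs]
    rw [Finset.sum_congr rfl hdiag]
    refine add_le_add ?_ le_rfl
    refine Finset.sum_le_sum fun x _ => Finset.sum_le_sum fun y _ => ?_
    calc f x * f y ≤ |f x * f y| := le_abs_self _
    _ = w x * w y := abs_mul _ _
  have hray := rayleigh_le_fun hD ξ w
  have hQw : ∑ x ∈ D, w x * hamApply D ξ w x = lam * ∑ x ∈ D, w x ^ 2 := by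
    have h1 : lam * ∑ x ∈ D, w x ^ 2 ≤ ∑ x ∈ D, w x * hamApply D ξ w x := by
      rw [hNeq, ← hQf]; exact hQge
    exact le_antisymm hray h1
  -- PSD argument
  set v : D → ℝ := fun y : D => w y with hv
  set Mm : Matrix D D ℝ := lam • (1 : Matrix D D ℝ) - matH D ξ with hMm
  have hMherm : Mm.IsHermitian := by
    refine Matrix.IsHermitian.sub ?_ (matH_isHermitian D ξ)
    ext i j
    simp [Matrix.conjTranspose_apply, Matrix.one_apply, eq_comm]
  have hMposd : Mm.PosSemidef := by
    refine Matrix.PosSemidef.of_dotProduct_mulVec_nonneg hMherm (fun z => ?_)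
    have hz : star z = z := by
      funext i; exact star_trivial _
    rw [hz, hMm, Matrix.sub_mulVec, dotProduct_sub, Matrix.smul_mulVec,
      Matrix.one_mulVec, dotProduct_smul]
    have := rayleigh_vec_le hD ξ z
    simp only [smul_eq_mul]
    linarith
  have hdot0 : v ⬝ᵥ (Mm *ᵥ v) = 0 := by
    rw [hMm, Matrix.sub_mulVec, dotProduct_sub, Matrix.smul_mulVec,
      Matrix.one_mulVec, dotProduct_smul]
    rw [hv, dot_ham, dot_self_fun]
    simp only [smul_eq_mul]
    rw [hQw]
    ring
  have hMv : Mm *ᵥ v = 0 := by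
    have := (hMposd.dotProduct_mulVec_zero_iff v).mp ?_
    · exact this
    · have hz : star v = v := by funext i; exact star_trivial _
      rw [hz]; exact hdot0
  have heigw : ∀ x ∈ D, hamApply D ξ w x = lam * w x := by
    intro x hx
    have h1 : (Mm *ᵥ v) ⟨x, hx⟩ = 0 := by rw [hMv]; rfl
    rw [hMm, Matrix.sub_mulVec, Matrix.smul_mulVec, Matrix.one_mulVec] at h1
    have h2 : (lam • v) ⟨x, hx⟩ - ((matH D ξ) *ᵥ v) ⟨x, hx⟩ = 0 := h1
    rw [hv, mulVec_matH ξ w ⟨x, hx⟩] at h2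
    simp only [Pi.smul_apply, smul_eq_mul] at h2
    linarith
  exact ⟨w, fun x hx => by rw [hw]; simp [hsupp x hx], hwnn,
    ⟨x₀, hx₀, by rw [hw]; simpa using hfx₀⟩, heigw⟩


lemma sum_sq_pos {D : Finset (Site d)} {f : Site d → ℝ} {x₀ : Site d}
    (hx₀ : x₀ ∈ D) (hf : f x₀ ≠ 0) : 0 < ∑ x ∈ D, f x ^ 2 := by
  have : (0:ℝ) < f x₀ ^ 2 := by positivity
  refine Finset.sum_pos' (fun x _ => sq_nonneg _) ⟨x₀, hx₀, this⟩

lemma eigen_le {D : Finset (Site d)} (hD : D.Nonempty) (ξ : Site d → ℝ) {μ : ℝ}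
    {f : Site d → ℝ} (hne : ∃ x ∈ D, f x ≠ 0)
    (heig : ∀ x ∈ D, hamApply D ξ f x = μ * f x) : μ ≤ lambdaK D ξ 1 := by
  obtain ⟨x₀, hx₀, hfx₀⟩ := hne
  have hN : 0 < ∑ x ∈ D, f x ^ 2 := sum_sq_pos hx₀ hfx₀
  have hQ : ∑ x ∈ D, f x * hamApply D ξ f x = μ * ∑ x ∈ D, f x ^ 2 := by
    rw [Finset.mul_sum]
    refine Finset.sum_congr rfl fun x hx => ?_
    rw [heig x hx]; ring
  have := rayleigh_le_fun hD ξ f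
  rw [hQ] at this
  exact le_of_mul_le_mul_right (by linarith) hN

lemma hamApply_shift {D : Finset (Site d)} (ξ f : Site d → ℝ) (t : ℝ) (x : Site d) :
    hamApply D (fun y => ξ y + t) f x = hamApply D ξ f x + t * f x := by
  simp only [hamApply]; ring

lemma lambdaK_shift {D : Finset (Site d)} (hD : D.Nonempty) (ξ : Site d → ℝ) (t : ℝ) :
    lambdaK D (fun x => ξ x + t) 1 = lambdaK D ξ 1 + t := by
  have key : ∀ (ζ : Site d → ℝ) (s : ℝ),
      lambdaK D ζ 1 + s ≤ lambdaK D (fun x => ζ x + s) 1 := by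
    intro ζ s
    obtain ⟨f, _, hne, heig⟩ := exists_eigenfun hD ζ
    exact eigen_le hD _ hne (fun x hx => by
      rw [hamApply_shift, heig x hx]; ring)
  have h1 := key ξ t
  have h2 := key (fun x => ξ x + t) (-t)
  have he : (fun x => (ξ x + t) + (-t)) = ξ := by funext x; ring
  rw [he] at h2
  linarith

lemma lambdaK_congr {D : Finset (Site d)} (hD : D.Nonempty) {ξ ξ' : Site d → ℝ}
    (h : ∀ x ∈ D, ξ x = ξ' x) : lambdaK D ξ 1 = lambdaK D ξ' 1 := by
  have key : ∀ {ζ ζ' : Site d → ℝ}, (∀ x ∈ D, ζ x = ζ' x) →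
      lambdaK D ζ 1 ≤ lambdaK D ζ' 1 := by
    intro ζ ζ' hzz
    obtain ⟨f, _, hne, heig⟩ := exists_eigenfun hD ζ
    refine eigen_le hD _ hne (fun x hx => ?_)
    rw [← heig x hx]
    simp only [hamApply, hzz x hx]
  exact le_antisymm (key h) (key (fun x hx => (h x hx).symm))

lemma lambdaK_mono_dom {D' D : Finset (Site d)} (hsub : D' ⊆ D) (hD' : D'.Nonempty)
    (ξ : Site d → ℝ) : lambdaK D' ξ 1 ≤ lambdaK D ξ 1 := by
  obtain ⟨f, hsupp, hne, heig⟩ := exists_eigenfun hD' ξ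
  have hD : D.Nonempty := hD'.mono hsub
  have hNeq : ∑ x ∈ D, f x ^ 2 = ∑ x ∈ D', f x ^ 2 :=
    (Finset.sum_subset hsub (fun x _ hx => by rw [hsupp x hx]; ring)).symm
  have hham : ∀ x ∈ D', hamApply D ξ f x = hamApply D' ξ f x := by
    intro x hx
    simp only [hamApply]
    congr 1
    refine (Finset.sum_subset (Finset.filter_subset_filter _ hsub) ?_).symm
    intro y hy hy'
    refine hsupp y ?_
    intro hyD'
    exact hy' (Finset.mem_filter.mpr ⟨hyD', (Finset.mem_filter.mp hy).2⟩)
  have hQ : ∑ x ∈ D, f x * hamApply D ξ f x = lambdaK D' ξ 1 * ∑ x ∈ D, f x ^ 2 := by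
    rw [hNeq, Finset.mul_sum]
    rw [← Finset.sum_subset hsub (fun x _ hx => by rw [hsupp x hx]; ring)]
    refine Finset.sum_congr rfl fun x hx => ?_
    rw [hham x hx, heig x hx]; ring
  have hray := rayleigh_le_fun hD ξ f
  rw [hQ, hNeq] at hray
  obtain ⟨x₀, hx₀, hfx₀⟩ := hne
  exact le_of_mul_le_mul_right hray (sum_sq_pos hx₀ hfx₀)

/-- each point has at most 2d neighbours of any finset -/
lemma card_nbrs (u : Site d) (E : Finset (Site d)) :
    (E.filter (fun y => dist1 u y = 1)).card ≤ 2 * d := by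
  classical
  have hsub : E.filter (fun y => dist1 u y = 1) ⊆
      (Finset.univ : Finset (Fin d × Bool)).image
        (fun p => Function.update u p.1 (u p.1 + if p.2 then 1 else -1)) := by
    intro y hy
    have hy1 : dist1 u y = 1 := (Finset.mem_filter.mp hy).2
    have hex : ∃ i : Fin d, (u i - y i).natAbs = 1 ∧
        ∀ j, j ≠ i → (u j - y j).natAbs = 0 := by
      by_contra hcon
      push_neg at hcon
      have : ∀ i : Fin d, (u i - y i).natAbs = 0 := by
        intro i
        by_contra hne0
        have h1 : 1 ≤ (u i - y i).natAbs := Nat.one_le_iff_ne_zero.mpr hne0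
        have hsum : dist1 u y = (u i - y i).natAbs +
            ∑ j ∈ Finset.univ.erase i, (u j - y j).natAbs := by
          rw [dist1, ← Finset.add_sum_erase _ _ (Finset.mem_univ i)]
        have hrest : ∑ j ∈ Finset.univ.erase i, (u j - y j).natAbs = 0 := by omega
        have hi1 : (u i - y i).natAbs = 1 := by omega
        obtain ⟨j, hj, hj0⟩ := hcon i hi1
        have := Finset.sum_eq_zero_iff.mp hrest j (Finset.mem_erase.mpr ⟨hj, Finset.mem_univ j⟩)
        exact hj0 this
      have : dist1 u y = 0 := Finset.sum_eq_zero (fun i _ => this i)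
      omega
    obtain ⟨i, hi, hrest⟩ := hex
    have hcase : y i = u i + 1 ∨ y i = u i + -1 := by omega
    refine Finset.mem_image.mpr ⟨⟨i, y i = u i + 1⟩, Finset.mem_univ _, ?_⟩
    funext j
    by_cases hj : j = i
    · subst hj
      rcases hcase with h | h <;> simp [Function.update_self, h]
    · have := hrest j hj
      simp only [Function.update_of_ne hj]
      omega
  calc (E.filter (fun y => dist1 u y = 1)).card
      ≤ _ := Finset.card_le_card hsub
    _ ≤ (Finset.univ : Finset (Fin d × Bool)).card := Finset.card_image_le
    _ = 2 * d := by simp [Fintype.card_prod, mul_comm]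

/-- swap adjacency double sums -/
lemma sum_adj_comm (B E : Finset (Site d)) (F : Site d → Site d → ℝ) :
    ∑ y ∈ B, ∑ u ∈ E.filter (fun u => dist1 y u = 1), F y u
      = ∑ u ∈ E, ∑ y ∈ B.filter (fun y => dist1 u y = 1), F y u := by
  classical
  simp only [Finset.sum_filter]
  rw [Finset.sum_comm]
  refine Finset.sum_congr rfl fun u _ => Finset.sum_congr rfl fun y _ => ?_
  rw [dist1_comm]

lemma lambdaK_nonpos {D : Finset (Site d)} (hD : D.Nonempty) {ξ : Site d → ℝ}
    (hξ : ∀ x ∈ D, ξ x ≤ 0) : lambdaK D ξ 1 ≤ 0 := by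
  obtain ⟨f, hsupp, hne, heig⟩ := exists_eigenfun hD ξ
  obtain ⟨x₀, hx₀, hfx₀⟩ := hne
  have hN : 0 < ∑ x ∈ D, f x ^ 2 := sum_sq_pos hx₀ hfx₀
  have hQ : lambdaK D ξ 1 * ∑ x ∈ D, f x ^ 2 = ∑ x ∈ D, f x * hamApply D ξ f x := by
    rw [Finset.mul_sum]
    refine Finset.sum_congr rfl fun x hx => ?_
    rw [heig x hx]; ring
  have hT : ∑ x ∈ D, f x * (∑ y ∈ D.filter (fun y => dist1 x y = 1), f y)
      ≤ 2 * d * ∑ x ∈ D, f x ^ 2 := by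
    have h1 : ∀ x ∈ D, f x * (∑ y ∈ D.filter (fun y => dist1 x y = 1), f y)
        ≤ ∑ y ∈ D.filter (fun y => dist1 x y = 1), (f x ^ 2 + f y ^ 2) / 2 := by
      intro x _
      rw [Finset.mul_sum]
      refine Finset.sum_le_sum fun y _ => ?_
      nlinarith [sq_nonneg (f x - f y)]
    calc ∑ x ∈ D, f x * (∑ y ∈ D.filter (fun y => dist1 x y = 1), f y)
        ≤ ∑ x ∈ D, ∑ y ∈ D.filter (fun y => dist1 x y = 1), (f x ^ 2 + f y ^ 2) / 2 :=
          Finset.sum_le_sum h1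
      _ = (∑ x ∈ D, ∑ y ∈ D.filter (fun y => dist1 x y = 1), f x ^ 2 / 2)
          + ∑ x ∈ D, ∑ y ∈ D.filter (fun y => dist1 x y = 1), f y ^ 2 / 2 := by
            rw [← Finset.sum_add_distrib]
            refine Finset.sum_congr rfl fun x _ => ?_
            rw [← Finset.sum_add_distrib]
            exact Finset.sum_congr rfl fun y _ => by ring
      _ ≤ 2 * d * ∑ x ∈ D, f x ^ 2 := by
          have hA : ∑ x ∈ D, ∑ _y ∈ D.filter (fun y => dist1 x y = 1), f x ^ 2 / 2
              ≤ ∑ x ∈ D, (2*d) * (f x ^ 2 / 2) := by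
            refine Finset.sum_le_sum fun x _ => ?_
            rw [Finset.sum_const, nsmul_eq_mul]
            have hc := card_nbrs x D
            have : (0:ℝ) ≤ f x ^ 2 / 2 := by positivity
            have : ((D.filter (fun y => dist1 x y = 1)).card : ℝ) ≤ 2*d := by
              exact_mod_cast hc
            nlinarith [sq_nonneg (f x)]
          have hB : ∑ x ∈ D, ∑ y ∈ D.filter (fun y => dist1 x y = 1), f y ^ 2 / 2
              ≤ ∑ y ∈ D, (2*d) * (f y ^ 2 / 2) := by
            rw [sum_adj_comm D D (fun _ y => f y ^ 2 / 2)]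
            refine Finset.sum_le_sum fun y _ => ?_
            rw [Finset.sum_const, nsmul_eq_mul]
            have hc := card_nbrs y D
            have : ((D.filter (fun z => dist1 y z = 1)).card : ℝ) ≤ 2*d := by
              exact_mod_cast hc
            nlinarith [sq_nonneg (f y)]
          calc _ ≤ (∑ x ∈ D, (2*d) * (f x ^ 2 / 2)) + ∑ y ∈ D, (2*d) * (f y ^ 2 / 2) := by
                  exact add_le_add hA hB
            _ = 2 * d * ∑ x ∈ D, f x ^ 2 := by
                  rw [← Finset.sum_add_distrib, Finset.mul_sum]
                  exact Finset.sum_congr rfl fun x _ => by ring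
  have hpot : ∑ x ∈ D, f x * ((ξ x - 2 * d) * f x) ≤ ∑ x ∈ D, (-(2*d)) * f x ^ 2 := by
    refine Finset.sum_le_sum fun x hx => ?_
    have := hξ x hx
    nlinarith [sq_nonneg (f x)]
  have hsplit : ∑ x ∈ D, f x * hamApply D ξ f x
      = (∑ x ∈ D, f x * (∑ y ∈ D.filter (fun y => dist1 x y = 1), f y))
        + ∑ x ∈ D, f x * ((ξ x - 2 * d) * f x) := by
    rw [← Finset.sum_add_distrib]
    refine Finset.sum_congr rfl fun x _ => ?_
    simp only [hamApply]; ring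
  have : lambdaK D ξ 1 * ∑ x ∈ D, f x ^ 2 ≤ 0 := by
    rw [hQ, hsplit]
    have : ∑ x ∈ D, (-(2*d)) * f x ^ 2 = -(2*d) * ∑ x ∈ D, f x ^ 2 := by
      rw [Finset.mul_sum]
    nlinarith [hT, hpot]
  nlinarith [hN]


lemma LC_shift (hρ : 0 < ρ) (D : Finset (Site d)) (φ : Site d → ℝ) (t : ℝ) :
    LC ρ D (fun x => φ x - t) = Real.exp (-t / ρ) * LC ρ D φ := by
  simp only [LC, Finset.mul_sum]
  refine Finset.sum_congr rfl fun x _ => ?_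
  rw [← Real.exp_add]
  congr 1
  rw [sub_div]
  ring

lemma LC_pos (D : Finset (Site d)) (hD : D.Nonempty) (φ : Site d → ℝ) : 0 < LC ρ D φ :=
  Finset.sum_pos (fun x _ => Real.exp_pos _) hD

lemma lambdaK_shift' {D : Finset (Site d)} (hD : D.Nonempty) (ξ : Site d → ℝ) (t : ℝ) :
    lambdaK D (fun x => ξ x - t) 1 = lambdaK D ξ 1 - t := by
  have h := lambdaK_shift hD ξ (-t)
  have he : (fun x => ξ x + (-t)) = (fun x => ξ x - t) := by funext x; ring
  rw [he] at h
  rw [h]; ring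

lemma chiSet_nonempty (hρ : 0 < ρ) (D : Finset (Site d)) :
    ((fun φ : Site d → ℝ => lambdaK D φ 1) '' {φ : Site d → ℝ | LC ρ D φ ≤ 1}).Nonempty := by
  refine ⟨lambdaK D (fun _ => -(ρ * Real.log (D.card + 1))) 1,
    ⟨_, ?_, rfl⟩⟩
  simp only [Set.mem_setOf_eq, LC]
  have hcard : (0:ℝ) < (D.card : ℝ) + 1 := by positivity
  have : Real.exp (-(ρ * Real.log (D.card + 1)) / ρ) = ((D.card : ℝ) + 1)⁻¹ := by
    rw [neg_div, mul_div_cancel_left₀ _ (ne_of_gt hρ), ← Real.log_inv, Real.exp_log (by positivity)]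
  rw [Finset.sum_const, this, nsmul_eq_mul]
  calc (D.card : ℝ) * ((D.card : ℝ) + 1)⁻¹ ≤ ((D.card : ℝ) + 1) * ((D.card : ℝ) + 1)⁻¹ :=
      mul_le_mul_of_nonneg_right (by linarith [Nat.cast_nonneg (α := ℝ) D.card]) (by positivity)
    _ = 1 := mul_inv_cancel₀ (ne_of_gt hcard)

lemma chiSet_le_zero (hρ : 0 < ρ) {D : Finset (Site d)} (hD : D.Nonempty) :
    ∀ s ∈ ((fun φ : Site d → ℝ => lambdaK D φ 1) '' {φ : Site d → ℝ | LC ρ D φ ≤ 1}), s ≤ 0 := by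
  rintro s ⟨φ, hφ, rfl⟩
  refine lambdaK_nonpos hD fun x hx => ?_
  have hterm : Real.exp (φ x / ρ) ≤ 1 := by
    calc Real.exp (φ x / ρ) ≤ LC ρ D φ :=
      Finset.single_le_sum (fun y _ => (Real.exp_pos (φ y / ρ)).le) hx
    _ ≤ 1 := hφ
  have h := Real.exp_le_one_iff.mp hterm
  have h2 := mul_le_mul_of_nonneg_right h hρ.le
  have h3 : φ x / ρ * ρ = φ x := div_mul_cancel₀ _ (ne_of_gt hρ)
  linarith

lemma le_neg_chi (hρ : 0 < ρ) {D : Finset (Site d)} (hD : D.Nonempty) {φ : Site d → ℝ}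
    (hφ : LC ρ D φ ≤ 1) : lambdaK D φ 1 ≤ -chi ρ D := by
  rw [chi, neg_neg]
  exact le_csSup ⟨0, fun s hs => chiSet_le_zero hρ hD s hs⟩ ⟨φ, hφ, rfl⟩

lemma chi_nonneg (hρ : 0 < ρ) {D : Finset (Site d)} (hD : D.Nonempty) : 0 ≤ chi ρ D := by
  rw [chi]
  have := csSup_le (chiSet_nonempty hρ D) (chiSet_le_zero hρ hD)
  linarith

lemma chi_inclusion (hρ : 0 < ρ) {D : Finset (Site d)} (hD : D.Nonempty) (ξ : Site d → ℝ)
    {b : ℝ} (hb : b ≤ lambdaK D ξ 1) :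
    1 ≤ LC ρ D (fun x => ξ x - b - chi ρ D) := by
  set L := LC ρ D ξ with hLdef
  have hL : 0 < L := LC_pos D hD ξ
  set t₀ := ρ * Real.log L with ht₀
  have h1 : LC ρ D (fun x => ξ x - t₀) = 1 := by
    rw [LC_shift hρ, ← hLdef]
    rw [ht₀, neg_div, mul_div_cancel_left₀ _ (ne_of_gt hρ), ← Real.log_inv,
      Real.exp_log (by positivity)]
    exact inv_mul_cancel₀ (ne_of_gt hL)
  have h2 : lambdaK D (fun x => ξ x - t₀) 1 ≤ -chi ρ D :=
    le_neg_chi hρ hD h1.le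
  rw [lambdaK_shift' hD] at h2
  have ht₀ge : b + chi ρ D ≤ t₀ := by linarith
  have he : (fun x => ξ x - b - chi ρ D) = (fun x => ξ x - (b + chi ρ D)) := by
    funext x; ring
  rw [he, LC_shift hρ, ← hLdef]
  have hLe : L = Real.exp (t₀ / ρ) := by
    rw [ht₀, mul_div_cancel_left₀ _ (ne_of_gt hρ), Real.exp_log hL]
  rw [hLe, ← Real.exp_add]
  have heq : -(b + chi ρ D) / ρ + t₀ / ρ = (t₀ - (b + chi ρ D)) / ρ := by ring
  have : (0:ℝ) ≤ -(b + chi ρ D) / ρ + t₀ / ρ := by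
    rw [heq]
    apply div_nonneg _ hρ.le
    linarith
  calc (1:ℝ) = Real.exp 0 := Real.exp_zero.symm
  _ ≤ _ := Real.exp_le_exp.mpr this

lemma chi_mono (hρ : 0 < ρ) {D' D : Finset (Site d)} (hsub : D' ⊆ D) (hD' : D'.Nonempty) :
    chi ρ D ≤ chi ρ D' := by
  have hD : D.Nonempty := hD'.mono hsub
  rw [chi, chi, neg_le_neg_iff]
  refine csSup_le (chiSet_nonempty hρ D') ?_
  rintro s ⟨φ, hφ, rfl⟩
  simp only [Set.mem_setOf_eq] at hφ
  refine le_of_forall_pos_le_add fun δ hδ => ?_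
  have hexp1 : Real.exp (-δ / ρ) < 1 := by
    rw [Real.exp_lt_one_iff]
    have h0 : 0 < δ / ρ := div_pos hδ hρ
    rw [neg_div]; linarith
  have hc : 0 < 1 - Real.exp (-δ / ρ) := by linarith
  set c := 1 - Real.exp (-δ / ρ) with hcdef
  set M := ρ * Real.log (((D.card : ℝ) + 1) / c) with hM
  have hcard1 : (0:ℝ) < (D.card : ℝ) + 1 := by positivity
  have hexpM : Real.exp (-M / ρ) = c / ((D.card : ℝ) + 1) := by
    rw [hM, neg_div, mul_div_cancel_left₀ _ (ne_of_gt hρ), ← Real.log_inv,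
      Real.exp_log (by positivity), inv_div]
  set ψ : Site d → ℝ := fun x => if x ∈ D' then φ x - δ else -M with hψ
  have hLψ : LC ρ D ψ ≤ 1 := by
    rw [LC, ← Finset.sum_sdiff hsub]
    have hA : ∑ x ∈ D \ D', Real.exp (ψ x / ρ)
        = ((D \ D').card : ℝ) * (c / ((D.card : ℝ) + 1)) := by
      have hterm : ∀ x ∈ D \ D', Real.exp (ψ x / ρ) = c / ((D.card : ℝ) + 1) := by
        intro x hx
        have hnot := (Finset.mem_sdiff.mp hx).2
        have hx2 : ψ x = -M := by rw [hψ]; simp only [hnot, if_false]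
        rw [hx2, hexpM]
      rw [Finset.sum_congr rfl hterm, Finset.sum_const, nsmul_eq_mul]
    have hB : ∑ x ∈ D', Real.exp (ψ x / ρ) ≤ Real.exp (-δ / ρ) := by
      have : ∑ x ∈ D', Real.exp (ψ x / ρ) = LC ρ D' (fun x => φ x - δ) := by
        refine Finset.sum_congr rfl fun x hx => ?_
        rw [hψ]; simp only [hx, if_true]
      rw [this, LC_shift hρ]
      calc Real.exp (-δ / ρ) * LC ρ D' φ ≤ Real.exp (-δ / ρ) * 1 :=
        mul_le_mul_of_nonneg_left hφ (Real.exp_pos _).le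
      _ = Real.exp (-δ / ρ) := mul_one _
    have hk : ((D \ D').card : ℝ) ≤ (D.card : ℝ) := by
      exact_mod_cast Finset.card_le_card (Finset.sdiff_subset)
    have hkr : ((D \ D').card : ℝ) * (c / ((D.card : ℝ) + 1)) ≤ c := by
      have h1 : ((D \ D').card : ℝ) * (c / ((D.card : ℝ) + 1))
          ≤ ((D.card : ℝ) + 1) * (c / ((D.card : ℝ) + 1)) :=
        mul_le_mul_of_nonneg_right (by linarith) (by positivity)
      have h2 : ((D.card : ℝ) + 1) * (c / ((D.card : ℝ) + 1)) = c := by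
        field_simp
      linarith
    rw [hA]
    linarith
  have hbdd : BddAbove ((fun φ : Site d → ℝ => lambdaK D φ 1) ''
      {φ : Site d → ℝ | LC ρ D φ ≤ 1}) := ⟨0, fun s hs => chiSet_le_zero hρ hD s hs⟩
  have hmem : lambdaK D ψ 1 ≤ sSup ((fun φ : Site d → ℝ => lambdaK D φ 1) ''
      {φ : Site d → ℝ | LC ρ D φ ≤ 1}) := le_csSup hbdd ⟨ψ, hLψ, rfl⟩
  have h1 : lambdaK D' ψ 1 = lambdaK D' (fun x => φ x - δ) 1 :=
    lambdaK_congr hD' (fun x hx => by rw [hψ]; simp only [hx, if_true])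
  have h2 := lambdaK_shift' hD' φ δ
  have h3 : lambdaK D' ψ 1 ≤ lambdaK D ψ 1 := lambdaK_mono_dom hsub hD' ψ
  simp only
  linarith


set_option maxHeartbeats 1000000 in
lemma trunc_lemma {D D' : Finset (Site d)} (hd : 0 < d) (hD : D.Nonempty)
    (hsub : D' ⊆ D) (ξ : Site d → ℝ) {A : ℝ} (h2d : 2 * (d:ℝ) ≤ A)
    (hout : ∀ x ∈ D, x ∉ D' → ξ x < lambdaK D ξ 1 - A) :
    D'.Nonempty ∧
      lambdaK D ξ 1 - 4*d^2*(A+2*d) / (A*(A+4*d)) ≤ lambdaK D' ξ 1 := by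
  classical
  have hd' : (0:ℝ) < d := by exact_mod_cast hd
  have hA0 : 0 < A := lt_of_lt_of_le (by positivity) h2d
  set lam := lambdaK D ξ 1 with hlam
  obtain ⟨w, hsupp, hwnn, ⟨x₀, hx₀, hwx₀⟩, heig⟩ := exists_nonneg_eigenfun hD ξ
  set B := D \ D' with hB
  -- pointwise neighbor sums
  have hS : ∀ x ∈ D, (∑ y ∈ D.filter (fun y => dist1 x y = 1), w y)
      = (lam - ξ x + 2*d) * w x := by
    intro x hx
    have := heig x hx
    simp only [hamApply] at this
    linarith [this]
  -- maximum point
  obtain ⟨z, hzD, hzmax⟩ := D.exists_max_image w hD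
  have hm : 0 < w z := lt_of_lt_of_le hwx₀ (hzmax x₀ hx₀)
  -- bound: neighbour sum at any point is at most 2d * max
  have hnbr_le : ∀ x ∈ D, (∑ y ∈ D.filter (fun y => dist1 x y = 1), w y) ≤ 2*d * w z := by
    intro x _
    calc (∑ y ∈ D.filter (fun y => dist1 x y = 1), w y)
        ≤ ∑ _y ∈ D.filter (fun y => dist1 x y = 1), w z :=
          Finset.sum_le_sum fun y hy => hzmax y (Finset.mem_of_mem_filter y hy)
      _ = ((D.filter (fun y => dist1 x y = 1)).card : ℝ) * w z := by
          rw [Finset.sum_const, nsmul_eq_mul]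
      _ ≤ 2*d * w z := by
          have : ((D.filter (fun y => dist1 x y = 1)).card : ℝ) ≤ 2*d := by
            exact_mod_cast card_nbrs x D
          exact mul_le_mul_of_nonneg_right this (hwnn z)
  have hzD' : z ∈ D' := by
    by_contra hzn
    have hξz := hout z hzD hzn
    have hSz := hS z hzD
    have h1 := hnbr_le z hzD
    rw [hSz] at h1
    nlinarith [hm]
  refine ⟨⟨z, hzD'⟩, ?_⟩
  -- notation
  set N' := ∑ x ∈ D', w x ^ 2 with hN'
  set N'' := ∑ x ∈ B, w x ^ 2 with hN''
  have hNsplit : N'' + N' = ∑ x ∈ D, w x ^ 2 := Finset.sum_sdiff hsub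
  have hN'nn : 0 ≤ N' := Finset.sum_nonneg fun x _ => sq_nonneg _
  have hN''nn : 0 ≤ N'' := Finset.sum_nonneg fun x _ => sq_nonneg _
  have hN'pos : 0 < N' := by
    refine Finset.sum_pos' (fun x _ => sq_nonneg _) ⟨z, hzD', by positivity⟩
  set P : Site d → ℝ := fun y => ∑ u ∈ D.filter (fun u => dist1 y u = 1), w u with hP
  have hPnn : ∀ y, 0 ≤ P y := fun y => Finset.sum_nonneg fun u _ => hwnn u
  have hstep5 : ∀ y ∈ B, (A + 2*d) * w y ≤ P y := by
    intro y hy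
    have hyD : y ∈ D := (Finset.mem_sdiff.mp hy).1
    have hyn : y ∉ D' := (Finset.mem_sdiff.mp hy).2
    have h1 := hS y hyD
    have h2 := hout y hyD hyn
    have hw := hwnn y
    show (A + 2*d) * w y ≤ ∑ u ∈ D.filter (fun u => dist1 y u = 1), w u
    rw [h1]
    nlinarith
  set T := ∑ y ∈ B, w y * P y with hT
  have hTnn : 0 ≤ T := Finset.sum_nonneg fun y _ => mul_nonneg (hwnn y) (hPnn y)
  have hT2 : T^2 ≤ N'' * ∑ y ∈ B, P y ^ 2 := by
    have := Finset.sum_mul_sq_le_sq_mul_sq B w P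
    rw [hT, hN'']
    exact this
  have hP2 : ∀ y, P y ^ 2 ≤ 2*d * ∑ u ∈ D.filter (fun u => dist1 y u = 1), w u ^ 2 := by
    intro y
    have hcs := Finset.sum_mul_sq_le_sq_mul_sq (D.filter (fun u => dist1 y u = 1))
      (fun _ => (1:ℝ)) w
    simp only [one_mul, one_pow] at hcs
    rw [Finset.sum_const, nsmul_eq_mul, mul_one] at hcs
    have hcard : ((D.filter (fun u => dist1 y u = 1)).card : ℝ) ≤ 2*d := by
      exact_mod_cast card_nbrs y D
    have hsq : 0 ≤ ∑ u ∈ D.filter (fun u => dist1 y u = 1), w u ^ 2 :=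
      Finset.sum_nonneg fun u _ => sq_nonneg _
    calc P y ^ 2 ≤ ((D.filter (fun u => dist1 y u = 1)).card : ℝ)
          * ∑ u ∈ D.filter (fun u => dist1 y u = 1), w u ^ 2 := hcs
      _ ≤ 2*d * ∑ u ∈ D.filter (fun u => dist1 y u = 1), w u ^ 2 :=
          mul_le_mul_of_nonneg_right hcard hsq
  have hPsum : ∑ y ∈ B, P y ^ 2 ≤ 4*d^2 * ∑ x ∈ D, w x ^ 2 := by
    calc ∑ y ∈ B, P y ^ 2
        ≤ ∑ y ∈ B, 2*d * ∑ u ∈ D.filter (fun u => dist1 y u = 1), w u ^ 2 :=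
          Finset.sum_le_sum fun y _ => hP2 y
      _ = 2*d * ∑ y ∈ B, ∑ u ∈ D.filter (fun u => dist1 y u = 1), w u ^ 2 := by
          rw [Finset.mul_sum]
      _ = 2*d * ∑ u ∈ D, ∑ y ∈ B.filter (fun y => dist1 u y = 1), w u ^ 2 := by
          rw [sum_adj_comm B D (fun _ u => w u ^ 2)]
      _ ≤ 2*d * ∑ u ∈ D, 2*d * w u ^ 2 := by
          refine mul_le_mul_of_nonneg_left (Finset.sum_le_sum fun u _ => ?_) (by positivity)
          rw [Finset.sum_const, nsmul_eq_mul]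
          have : ((B.filter (fun y => dist1 u y = 1)).card : ℝ) ≤ 2*d := by
            exact_mod_cast card_nbrs u B
          nlinarith [sq_nonneg (w u)]
      _ = 4*d^2 * ∑ x ∈ D, w x ^ 2 := by
          rw [Finset.mul_sum, Finset.mul_sum]
          refine Finset.sum_congr rfl fun x _ => by ring
  have hTle : (A + 2*d) * N'' ≤ T := by
    rw [hT, hN'', Finset.mul_sum]
    refine Finset.sum_le_sum fun y hy => ?_
    have := hstep5 y hy
    have := hwnn y
    nlinarith
  -- N'' bound
  have hG : 0 < A*(A+4*d) := by positivity
  have hN''bd : N'' * (A*(A+4*d)) ≤ 4*d^2 * N' := by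
    rcases eq_or_lt_of_le hN''nn with h0 | hpos
    · rw [← h0, zero_mul]; positivity
    · have key1 : ((A + 2*d) * N'')^2 ≤ T^2 := by
        have h1 : 0 ≤ (A + 2*d) * N'' := by positivity
        exact pow_le_pow_left₀ h1 hTle 2
      have key2 : T^2 ≤ N'' * (4*d^2 * (N'' + N')) := by
        calc T^2 ≤ N'' * ∑ y ∈ B, P y ^ 2 := hT2
        _ ≤ N'' * (4*d^2 * ∑ x ∈ D, w x ^ 2) :=
            mul_le_mul_of_nonneg_left (hPsum) hN''nn
        _ = N'' * (4*d^2 * (N'' + N')) := by rw [hNsplit]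
      have key3 : (N'' * (A*(A+4*d))) * N'' ≤ (4*d^2 * N') * N'' := by nlinarith
      exact le_of_mul_le_mul_right key3 hpos
  -- main cross term
  set Main := ∑ x ∈ D', w x * (∑ y ∈ B.filter (fun y => dist1 x y = 1), w y) with hMain
  have hMainT : Main ≤ T := by
    have hswap : Main = ∑ y ∈ B, ∑ x ∈ D'.filter (fun x => dist1 y x = 1), w x * w y := by
      rw [hMain, ← sum_adj_comm D' B (fun x y => w x * w y)]
      exact Finset.sum_congr rfl fun x _ => Finset.mul_sum _ _ _
    rw [hswap, hT]
    refine Finset.sum_le_sum fun y hy => ?_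
    rw [← Finset.sum_mul]
    have hsub2 : D'.filter (fun x => dist1 y x = 1) ⊆ D.filter (fun x => dist1 y x = 1) :=
      Finset.filter_subset_filter _ hsub
    have h1 : ∑ x ∈ D'.filter (fun x => dist1 y x = 1), w x ≤ P y :=
      Finset.sum_le_sum_of_subset_of_nonneg hsub2 (fun u _ _ => hwnn u)
    calc (∑ x ∈ D'.filter (fun x => dist1 y x = 1), w x) * w y
        ≤ P y * w y := mul_le_mul_of_nonneg_right h1 (hwnn y)
      _ = w y * P y := mul_comm _ _
  set c := 4*d^2*(A+2*d) / (A*(A+4*d)) with hc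
  have hcnn : 0 ≤ c := by positivity
  have hMainBound : Main ≤ c * N' := by
    have key2 : T^2 ≤ N'' * (4*d^2 * (N'' + N')) := by
      calc T^2 ≤ N'' * ∑ y ∈ B, P y ^ 2 := hT2
      _ ≤ N'' * (4*d^2 * ∑ x ∈ D, w x ^ 2) :=
          mul_le_mul_of_nonneg_left hPsum hN''nn
      _ = N'' * (4*d^2 * (N'' + N')) := by rw [hNsplit]
    have hGN : 0 ≤ N'' * (A*(A+4*d)) := by positivity
    have e3 : (N''*(A*(A+4*d)))^2 ≤ (4*d^2*N')^2 := by
      apply pow_le_pow_left₀ hGN hN''bd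
    have e4 : (N''*(A*(A+4*d)))*N' ≤ (4*d^2*N')*N' := mul_le_mul_of_nonneg_right hN''bd hN'nn
    have hcc : (c*N')^2 * (A*(A+4*d))^2 = (4*d^2)^2*((A*(A+4*d))+4*d^2)*N'^2 := by
      have hcG : c * (A*(A+4*d)) = 4*d^2*(A+2*d) := div_mul_cancel₀ _ (ne_of_gt hG)
      calc (c*N')^2 * (A*(A+4*d))^2 = (c * (A*(A+4*d)))^2 * N'^2 := by ring
      _ = (4*d^2*(A+2*d))^2 * N'^2 := by rw [hcG]
      _ = (4*d^2)^2*((A*(A+4*d))+4*d^2)*N'^2 := by ring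
    have hmain2 : T^2 * (A*(A+4*d))^2 ≤ (4*d^2)^2*((A*(A+4*d))+4*d^2)*N'^2 := by
      have h1 : T^2 * (A*(A+4*d))^2 ≤ (N'' * (4*d^2 * (N'' + N'))) * (A*(A+4*d))^2 :=
        mul_le_mul_of_nonneg_right key2 (sq_nonneg _)
      have h2 : (4*d^2) * (N''*(A*(A+4*d)))^2 ≤ (4*d^2) * (4*d^2*N')^2 :=
        mul_le_mul_of_nonneg_left e3 (by positivity)
      have h3 : ((4*d^2)*(A*(A+4*d))) * ((N''*(A*(A+4*d)))*N')
          ≤ ((4*d^2)*(A*(A+4*d))) * ((4*d^2*N')*N') :=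
        mul_le_mul_of_nonneg_left e4 (by positivity)
      nlinarith [h1, h2, h3]
    have h5 : T^2 * (A*(A+4*d))^2 ≤ (c*N')^2 * (A*(A+4*d))^2 := by rw [hcc]; exact hmain2
    have hT2le : T^2 ≤ (c*N')^2 := le_of_mul_le_mul_right h5 (by positivity)
    have hcN'nn : 0 ≤ c * N' := by positivity
    have hTc : T ≤ c * N' := by nlinarith [hT2le, hTnn, hcN'nn]
    linarith [hMainT]
  -- eigen equation on the truncated domain
  have hfilter_split : ∀ x : Site d, D.filter (fun y => dist1 x y = 1)
      = D'.filter (fun y => dist1 x y = 1) ∪ B.filter (fun y => dist1 x y = 1) := by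
    intro x
    ext y
    simp only [Finset.mem_union, Finset.mem_filter, hB, Finset.mem_sdiff]
    constructor
    · rintro ⟨hyD, hp⟩
      by_cases hyD' : y ∈ D'
      · exact Or.inl ⟨hyD', hp⟩
      · exact Or.inr ⟨⟨hyD, hyD'⟩, hp⟩
    · rintro (⟨hyD', hp⟩ | ⟨⟨hyD, _⟩, hp⟩)
      · exact ⟨hsub hyD', hp⟩
      · exact ⟨hyD, hp⟩
  have hdisj : ∀ x : Site d, Disjoint (D'.filter (fun y => dist1 x y = 1))
      (B.filter (fun y => dist1 x y = 1)) := by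
    intro x
    refine Finset.disjoint_filter_filter ?_
    rw [hB]
    exact Finset.disjoint_sdiff
  have hham' : ∀ x ∈ D', hamApply D' ξ w x
      = lam * w x - ∑ y ∈ B.filter (fun y => dist1 x y = 1), w y := by
    intro x hx
    have hxD := hsub hx
    have h1 := heig x hxD
    simp only [hamApply] at h1 ⊢
    have h2 : ∑ y ∈ D.filter (fun y => dist1 x y = 1), w y
        = (∑ y ∈ D'.filter (fun y => dist1 x y = 1), w y)
          + ∑ y ∈ B.filter (fun y => dist1 x y = 1), w y := by
      rw [hfilter_split x, Finset.sum_union (hdisj x)]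
    rw [h2] at h1
    linarith
  have hQ' : ∑ x ∈ D', w x * hamApply D' ξ w x = lam * N' - Main := by
    rw [hMain, hN', Finset.mul_sum, ← Finset.sum_sub_distrib]
    refine Finset.sum_congr rfl fun x hx => ?_
    rw [hham' x hx]
    ring
  have hray := rayleigh_le_fun ⟨z, hzD'⟩ ξ w
  rw [hQ'] at hray
  have hfin : (lam - c) * N' ≤ lambdaK D' ξ 1 * N' := by nlinarith [hMainBound]
  have := le_of_mul_le_mul_right hfin hN'pos
  rw [hc] at this
  linarith


/-- Lemma 4.6: for `A ≥ χ_C` with `A(1+A/(4d)) ≥ 4d` and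
`η(A) := 2d(1+A/(4d))⁻¹`: if `λ_C^{(1)}(ξ) ≥ a` then `L_{C,A}(ξ-a-χ_C) ≥ e^{-η(A)/ρ}`. -/
theorem truncated_LD_bound {d : ℕ} (hd : 0 < d) (ρ : ℝ) (hρ : 0 < ρ)
    (C : Finset (Site d)) (hC : C.Nonempty) (A : ℝ)
    (hAchi : chi ρ C ≤ A) (hA : 4 * d ≤ A * (1 + A / (4 * d)))
    (a : ℝ) (ξ : Site d → ℝ) (hlam : a ≤ lambdaK C ξ 1) :
    Real.exp (-(2 * d * (1 + A / (4 * d))⁻¹) / ρ) ≤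
      LCA ρ A C (fun x => ξ x - a - chi ρ C) := by
  classical
  set χ := chi ρ C with hχdef
  set lam := lambdaK C ξ 1 with hlamdef
  have hd' : (0:ℝ) < d := by exact_mod_cast hd
  have hχ0 : 0 ≤ χ := chi_nonneg hρ hC
  have hA0 : (0:ℝ) ≤ A := le_trans hχ0 hAchi
  have h2d : 2*(d:ℝ) ≤ A := by
    by_contra hlt
    push_neg at hlt
    have h1 : A^2/(4*(d:ℝ)) < d := by
      rw [div_lt_iff₀ (by positivity)]
      nlinarith
    have h2 : A * (1 + A/(4*(d:ℝ))) = A + A^2/(4*(d:ℝ)) := by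
      field_simp
    rw [h2] at hA
    nlinarith
  have hAp : (0:ℝ) < A := lt_of_lt_of_le (by positivity) h2d
  set C' := C.filter (fun x => -(2*A) ≤ ξ x - a - χ) with hC'def
  have hsub : C' ⊆ C := Finset.filter_subset _ _
  have hout : ∀ x ∈ C, x ∉ C' → ξ x < lam - A := by
    intro x hx hxn
    have : ¬ (-(2*A) ≤ ξ x - a - χ) := by
      intro hcon
      exact hxn (Finset.mem_filter.mpr ⟨hx, hcon⟩)
    push_neg at this
    linarith
  obtain ⟨hC'ne, htr⟩ := trunc_lemma hd hC hsub ξ h2d hout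
  set η := 2*(d:ℝ)*(1 + A/(4*(d:ℝ)))⁻¹ with hη
  have hA4 : (0:ℝ) < A + 4*d := by positivity
  have hinv : (1 + A/(4*(d:ℝ)))⁻¹ = 4*(d:ℝ)/(4*(d:ℝ)+A) := by
    rw [show (1 + A/(4*(d:ℝ))) = (4*(d:ℝ)+A)/(4*(d:ℝ)) by field_simp]
    rw [inv_div]
  have hηeq : η = 8*(d:ℝ)^2/(4*(d:ℝ)+A) := by
    rw [hη, hinv]
    field_simp
    ring
  have hcη : 4*(d:ℝ)^2*(A+2*(d:ℝ)) / (A*(A+4*(d:ℝ))) ≤ η := by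
    rw [hηeq, div_le_div_iff₀ (by positivity) (by positivity)]
    have hpos : (0:ℝ) ≤ 4*(d:ℝ)^2*(A+4*(d:ℝ))*(A-2*(d:ℝ)) := by
      apply mul_nonneg
      apply mul_nonneg (by positivity) hA4.le
      linarith
    nlinarith [hpos]
  have htr2 : a - η ≤ lambdaK C' ξ 1 := by
    have : lam - 4*(d:ℝ)^2*(A+2*(d:ℝ)) / (A*(A+4*(d:ℝ))) ≤ lambdaK C' ξ 1 := htr
    linarith
  set χ' := chi ρ C' with hχ'def
  have hχmono : χ ≤ χ' := chi_mono hρ hsub hC'ne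
  have hinc : 1 ≤ LC ρ C' (fun x => ξ x - (a - η) - χ') := chi_inclusion hρ hC'ne ξ htr2
  have hsum1 : ∑ x ∈ C', Real.exp ((ξ x - a - χ)/ρ)
      ≤ LCA ρ A C (fun x => ξ x - a - χ) := by
    rw [LCA]
    have hcongr : ∀ x ∈ C', Real.exp ((ξ x - a - χ)/ρ)
        = if -(2*A) ≤ (ξ x - a - χ) then Real.exp ((ξ x - a - χ)/ρ) else 0 := by
      intro x hx
      rw [if_pos (Finset.mem_filter.mp hx).2]
    rw [Finset.sum_congr rfl hcongr]
    refine Finset.sum_le_sum_of_subset_of_nonneg hsub ?_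
    intro x _ _
    split
    · exact (Real.exp_pos _).le
    · exact le_rfl
  have hsum2 : Real.exp ((χ' - χ - η)/ρ) * LC ρ C' (fun x => ξ x - (a - η) - χ')
      = ∑ x ∈ C', Real.exp ((ξ x - a - χ)/ρ) := by
    rw [LC, Finset.mul_sum]
    refine Finset.sum_congr rfl fun x _ => ?_
    rw [← Real.exp_add, ← add_div]
    congr 2
    ring
  calc Real.exp (-(2 * d * (1 + A / (4 * d))⁻¹) / ρ) = Real.exp (-η/ρ) := by rw [hη]
  _ ≤ Real.exp ((χ' - χ - η)/ρ) * 1 := by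
      rw [mul_one]
      apply Real.exp_le_exp.mpr
      apply (div_le_div_iff_of_pos_right hρ).mpr
      linarith
  _ ≤ Real.exp ((χ' - χ - η)/ρ) * LC ρ C' (fun x => ξ x - (a - η) - χ') :=
      mul_le_mul_of_nonneg_left hinc (Real.exp_pos _).le
  _ = ∑ x ∈ C', Real.exp ((ξ x - a - χ)/ρ) := hsum2
  _ ≤ LCA ρ A C (fun x => ξ x - a - χ) := hsum1

end RSO
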